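/- Let G = C_{n_1} × ... × C_{n_k} with 1 < n_1 | n_2 | ... | n_k and k ≥ 2, with generators a_1, ..., a_k. For 1 ≤ i ≤ k−1, the quotient of G by H_i = ⟨a_1, ..., a_{i−1}, a_i a_k^{n_k/n_i}, a_{i+1}, ..., a_{k−1}⟩ is cyclic of order n_k. -/
import Mathlib


/-- The abelian group with invariant factors `n 0 ∣ n 1 ∣ ... ∣ n (k-1)`. -/
abbrev IG (k : ℕ) (n : Fin k → ℕ) := ∀ i : Fin k, Multiplicative (ZMod (n i))

/-- The canonical generator of the `i`-th cyclic factor. -/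
abbrev gen (k : ℕ) (n : Fin k → ℕ) (i : Fin k) : IG k n :=
  Pi.mulSingle i (Multiplicative.ofAdd (1 : ZMod (n i)))

lemma pow_ofAdd_one (N t : ℕ) :
    (Multiplicative.ofAdd (1 : ZMod N)) ^ t = Multiplicative.ofAdd ((t : ZMod N)) := by
  rw [← ofAdd_nsmul]; congr 1; simp [nsmul_eq_mul]

lemma aux_stmt10 (k : ℕ) (n : Fin k → ℕ) (h1 : ∀ i, 1 < n i) (i K : Fin k)
    (hiK : (i : ℕ) < (K : ℕ)) (hlast : (K : ℕ) = k - 1) (hd : n i ∣ n K) :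
    IsCyclic (IG k n ⧸ Subgroup.closure
        ((fun j : Fin k => if j = i then gen k n i * gen k n K ^ (n K / n i) else gen k n j)
          '' {j : Fin k | (j : ℕ) < k - 1})) ∧
    Nat.card (IG k n ⧸ Subgroup.closure
        ((fun j : Fin k => if j = i then gen k n i * gen k n K ^ (n K / n i) else gen k n j)
          '' {j : Fin k | (j : ℕ) < k - 1})) = n K := by
  haveI : ∀ j, NeZero (n j) := fun j => ⟨by have := h1 j; omega⟩
  set m : ℕ := n K / n i with hm
  have hmul : n i * m = n K := Nat.mul_div_cancel' hd
  have hineK : i ≠ K := fun h => by simp [h] at hiK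
  have hKnei : K ≠ i := fun h => hineK h.symm
  -- the additive hom ZMod (n i) →+ ZMod (n K), 1 ↦ m
  have hf : ((AddMonoidHom.mulRight ((m : ZMod (n K)))).comp
      (Int.castAddHom (ZMod (n K)))) ((n i : ℤ)) = 0 := by
    simp only [AddMonoidHom.comp_apply, Int.coe_castAddHom, AddMonoidHom.mulRight_apply,
      Int.cast_natCast]
    rw [← Nat.cast_mul, hmul, ZMod.natCast_self]
  set ψ : ZMod (n i) →+ ZMod (n K) := ZMod.lift (n i) ⟨_, hf⟩ with hψ
  have hψ_cast : ∀ c : ℕ, ψ ((c : ZMod (n i))) = ((c * m : ℕ) : ZMod (n K)) := by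
    intro c
    have h : ((c : ℤ) : ZMod (n i)) = (c : ZMod (n i)) := by push_cast; rfl
    rw [← h, hψ, ZMod.lift_coe]
    push_cast
    simp
  -- the homomorphism to the cyclic group
  set φ : IG k n →* Multiplicative (ZMod (n K)) :=
    MonoidHom.mk' (fun x => Multiplicative.ofAdd
      (Multiplicative.toAdd (x K) - ψ (Multiplicative.toAdd (x i))))
      (by
        intro a b
        simp only [Pi.mul_apply, toAdd_mul, map_add, ← ofAdd_add]
        congr 1
        ring) with hφdef
  have hφ_apply : ∀ x : IG k n, φ x = Multiplicative.ofAdd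
      (Multiplicative.toAdd (x K) - ψ (Multiplicative.toAdd (x i))) := fun x => rfl
  have hsurj : Function.Surjective φ := by
    intro z
    refine ⟨Pi.mulSingle K z, ?_⟩
    rw [hφ_apply, Pi.mulSingle_eq_same, Pi.mulSingle_eq_of_ne hineK]
    simp
  have hker : Subgroup.closure
      ((fun j : Fin k => if j = i then gen k n i * gen k n K ^ m else gen k n j)
        '' {j : Fin k | (j : ℕ) < k - 1}) = φ.ker := by
    apply le_antisymm
    · rw [Subgroup.closure_le]
      rintro _ ⟨j, hj, rfl⟩
      simp only [Set.mem_setOf_eq] at hj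
      have hjK : j ≠ K := fun h => by omega
      rw [SetLike.mem_coe, MonoidHom.mem_ker]
      rcases eq_or_ne j i with rfl | hji
      · dsimp only
        rw [if_pos rfl, hφ_apply]
        simp only [gen]
        rw [Pi.mul_apply, Pi.mul_apply, Pi.pow_apply, Pi.pow_apply,
          Pi.mulSingle_eq_same, Pi.mulSingle_eq_same,
          Pi.mulSingle_eq_of_ne hKnei, Pi.mulSingle_eq_of_ne hjK]
        rw [pow_ofAdd_one]
        simp only [one_mul, mul_one, one_pow, toAdd_ofAdd]
        have := hψ_cast 1
        rw [Nat.cast_one, one_mul] at this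
        rw [this]
        simp
      · dsimp only
        rw [if_neg hji, hφ_apply]
        simp only [gen]
        rw [Pi.mulSingle_eq_of_ne (fun h : K = j => hjK h.symm),
          Pi.mulSingle_eq_of_ne (fun h : i = j => hji h.symm)]
        simp
    · intro x hx
      rw [MonoidHom.mem_ker, hφ_apply] at hx
      have hxK : Multiplicative.toAdd (x K) = ψ (Multiplicative.toAdd (x i)) := by
        have := congrArg Multiplicative.toAdd hx
        simpa [sub_eq_zero] using this
      have key : x = ∏ j ∈ Finset.univ.filter (fun j : Fin k => (j : ℕ) < k - 1),
          ((fun j : Fin k => if j = i then gen k n i * gen k n K ^ m else gen k n j) j)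
            ^ (Multiplicative.toAdd (x j)).val := by
        funext l
        rw [Finset.prod_apply]
        rcases eq_or_ne l K with hEq | hlK
        · obtain rfl : K = l := hEq.symm
          rw [Finset.prod_eq_single i]
          · dsimp only
            rw [if_pos rfl]
            simp only [gen]
            rw [Pi.pow_apply, Pi.mul_apply, Pi.pow_apply,
              Pi.mulSingle_eq_of_ne hKnei, Pi.mulSingle_eq_same, one_mul,
              pow_ofAdd_one, ← ofAdd_nsmul, nsmul_eq_mul]
            have hx2 : x K = Multiplicative.ofAdd (ψ (Multiplicative.toAdd (x i))) := by
              rw [← hxK, ofAdd_toAdd]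
            have hv : Multiplicative.toAdd (x i)
                = (((Multiplicative.toAdd (x i)).val : ℕ) : ZMod (n i)) :=
              (ZMod.natCast_rightInverse (Multiplicative.toAdd (x i))).symm
            have hψv : ψ (Multiplicative.toAdd (x i))
                = (((Multiplicative.toAdd (x i)).val * m : ℕ) : ZMod (n K)) := by
              conv_lhs => rw [hv]
              rw [hψ_cast]
            rw [hx2, hψv]
            congr 1
            push_cast
            ring
          · intro j hj hji
            simp only [Finset.mem_filter, Set.mem_setOf_eq] at hj
            have hjK : j ≠ K := fun h => by omega
            dsimp only
            simp only [gen]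
            rw [if_neg hji, Pi.pow_apply, Pi.mulSingle_eq_of_ne (fun h : K = j => hjK h.symm),
              one_pow]
          · intro h
            simp only [Finset.mem_filter, Finset.mem_univ, true_and, Set.mem_setOf_eq] at h
            omega
        · have hlval : (l : ℕ) < k - 1 := by
            have := l.isLt
            have : (l : ℕ) ≠ k - 1 := fun h => hlK (Fin.ext (h.trans hlast.symm))
            omega
          rw [Finset.prod_eq_single l]
          · have hterm : ((fun j : Fin k =>
                if j = i then gen k n i * gen k n K ^ m else gen k n j) l) l
                = Multiplicative.ofAdd (1 : ZMod (n l)) := by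
              dsimp only
              simp only [gen]
              rcases eq_or_ne l i with rfl | hli
              · rw [if_pos rfl, Pi.mul_apply, Pi.pow_apply, Pi.mulSingle_eq_same,
                  Pi.mulSingle_eq_of_ne hineK, one_pow, mul_one]
              · rw [if_neg hli, Pi.mulSingle_eq_same]
            rw [Pi.pow_apply, hterm, pow_ofAdd_one,
              ZMod.natCast_rightInverse (Multiplicative.toAdd (x l))]
            rfl
          · intro j hj hjl
            simp only [Finset.mem_filter, Set.mem_setOf_eq] at hj
            dsimp only
            simp only [gen]
            rcases eq_or_ne j i with rfl | hji
            · rw [if_pos rfl, Pi.pow_apply, Pi.mul_apply, Pi.pow_apply,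
                Pi.mulSingle_eq_of_ne (fun h : l = j => hjl h.symm),
                Pi.mulSingle_eq_of_ne hlK, one_pow, one_mul, one_pow]
            · rw [if_neg hji, Pi.pow_apply,
                Pi.mulSingle_eq_of_ne (fun h : l = j => hjl h.symm), one_pow]
          · intro h
            simp only [Finset.mem_filter, Finset.mem_univ, true_and, Set.mem_setOf_eq] at h
            exact absurd hlval h
      rw [key]
      refine Subgroup.prod_mem _ (fun j hj => Subgroup.pow_mem _ ?_ _)
      exact Subgroup.subset_closure
        ⟨j, by simpa using (Finset.mem_filter.mp hj).2, rfl⟩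
  have e : (IG k n ⧸ Subgroup.closure
      ((fun j : Fin k => if j = i then gen k n i * gen k n K ^ m else gen k n j)
        '' {j : Fin k | (j : ℕ) < k - 1})) ≃* Multiplicative (ZMod (n K)) :=
    (QuotientGroup.quotientMulEquivOfEq hker).trans
      (QuotientGroup.quotientKerEquivOfSurjective φ hsurj)
  constructor
  · exact isCyclic_of_surjective e.symm e.symm.surjective
  · rw [Nat.card_congr e.toEquiv, Nat.card_congr Multiplicative.toAdd, Nat.card_zmod]

theorem stmt_10 (k : ℕ) (hk : 2 ≤ k) (n : Fin k → ℕ)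
    (h1 : ∀ i, 1 < n i) (hdvd : ∀ i j : Fin k, i ≤ j → n i ∣ n j)
    (i : Fin k) (hi : (i : ℕ) < k - 1) :
    IsCyclic (IG k n ⧸ Subgroup.closure
        ((fun j : Fin k => if j = i then
            gen k n i * gen k n ⟨k - 1, by omega⟩ ^ (n ⟨k - 1, by omega⟩ / n i)
          else gen k n j) '' {j : Fin k | (j : ℕ) < k - 1})) ∧
    Nat.card (IG k n ⧸ Subgroup.closure
        ((fun j : Fin k => if j = i then
            gen k n i * gen k n ⟨k - 1, by omega⟩ ^ (n ⟨k - 1, by omega⟩ / n i)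
          else gen k n j) '' {j : Fin k | (j : ℕ) < k - 1})) = n ⟨k - 1, by omega⟩ :=
  aux_stmt10 k n h1 i ⟨k - 1, by omega⟩ hi rfl
    (hdvd i ⟨k - 1, by omega⟩ (by rw [Fin.le_def]; simpa using Nat.le_of_lt hi))
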